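/- The Jacobi form F satisfies the heat equation ∂F/∂τ (x,z,τ) = ∂²F/∂z∂x (x,z,τ) at every point (x,z,τ) with τ in the upper half plane, θ(x|τ) ≠ 0, and θ(2πiz|τ) ≠ 0; here ∂F/∂τ is the complex derivative of τ ↦ F(x,z,τ), and ∂²F/∂z∂x is the complex derivative in z of the complex derivative in x of F. -/

import Mathlib

open Complex Filter

/-- The Jacobi theta function `θ(z|τ) = ∑_{n∈ℤ} (−1)^n e^{iπτ(n+1/2)²} e^{z(n+1/2)}`,
here as a function of an arbitrary complex `τ` (the series converges when `Im τ > 0`). -/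
noncomputable def jTheta (z τ : ℂ) : ℂ :=
  ∑' n : ℤ, (-1 : ℂ) ^ n * Complex.exp (Real.pi * I * τ * ((n : ℂ) + 1/2) ^ 2)
    * Complex.exp (z * ((n : ℂ) + 1/2))

/-- The Jacobi form `F(x,z,τ) = 2πi θ'(0|τ) θ(x+2πiz|τ)/(θ(x|τ) θ(2πiz|τ))`. -/
noncomputable def jacobiF (x z τ : ℂ) : ℂ :=
  2 * Real.pi * I * deriv (fun w => jTheta w τ) 0 * jTheta (x + 2 * Real.pi * I * z) τ /
    (jTheta x τ * jTheta (2 * Real.pi * I * z) τ)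

namespace JacobiHeat

/-- single term of the theta series -/
noncomputable def jt (n : ℤ) (z τ : ℂ) : ℂ :=
  (-1 : ℂ) ^ n * Complex.exp (Real.pi * I * τ * ((n : ℂ) + 1/2) ^ 2)
    * Complex.exp (z * ((n : ℂ) + 1/2))

/-- theta and its z-derivatives -/
noncomputable def Th (j : ℕ) (z τ : ℂ) : ℂ := ∑' n : ℤ, ((n : ℂ) + 1/2) ^ j * jt n z τ

lemma jTheta_eq (z τ : ℂ) : jTheta z τ = Th 0 z τ := by
  unfold jTheta Th jt
  exact tsum_congr fun n => by rw [pow_zero, one_mul]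

/-- the bound function -/
noncomputable def bnd (k : ℕ) (T S : ℝ) (n : ℤ) : ℝ :=
  |(n : ℝ) + 1/2| ^ k * Real.exp (-Real.pi * T * ((n : ℝ) + 1/2) ^ 2 + S * |(n : ℝ) + 1/2|)

lemma bnd_nonneg (k : ℕ) (T S : ℝ) (n : ℤ) : 0 ≤ bnd k T S n := by
  unfold bnd; positivity

lemma summable_bnd (k : ℕ) {T : ℝ} (hT : 0 < T) (S : ℝ) : Summable (bnd k T S) := by
  set S1 : ℝ := (Real.pi * T + |S|) / (2 * Real.pi) with hS1
  have key := (summable_pow_mul_jacobiTheta₂_term_bound S1 hT k)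
  have key0 := (summable_pow_mul_jacobiTheta₂_term_bound S1 hT 0)
  simp_rw [Int.cast_abs] at key key0
  have hsum : Summable (fun n : ℤ => (Real.exp |S| * 2 ^ k) *
      ((|(n:ℝ)| ^ k + 1) * Real.exp (-Real.pi * (T * (n:ℝ) ^ 2 - 2 * S1 * |(n:ℝ)|)))) := by
    apply Summable.mul_left
    simp_rw [add_mul, one_mul]
    exact key.add (by simpa using key0)
  apply hsum.of_nonneg_of_le (fun n => bnd_nonneg k T S n)
  intro n
  have hπ := Real.pi_pos
  have h12 : |(1:ℝ)/2| ≤ 1 := by rw [abs_of_pos] <;> norm_num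
  have h1 : |(n : ℝ) + 1/2| ≤ |(n:ℝ)| + 1 := by
    calc |(n : ℝ) + 1/2| ≤ |(n:ℝ)| + |(1:ℝ)/2| := abs_add_le _ _
      _ ≤ |(n:ℝ)| + 1 := by linarith
  have habs0 : (0:ℝ) ≤ |(n:ℝ)| := abs_nonneg _
  have h2 : |(n : ℝ) + 1/2| ^ k ≤ 2 ^ k * (|(n:ℝ)| ^ k + 1) := by
    calc |(n : ℝ) + 1/2| ^ k ≤ (|(n:ℝ)| + 1) ^ k := pow_le_pow_left₀ (abs_nonneg _) h1 k
      _ ≤ (2 * max |(n:ℝ)| 1) ^ k := by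
          apply pow_le_pow_left₀ (by positivity)
          rcases le_total |(n:ℝ)| 1 with h | h
          · rw [max_eq_right h]; linarith
          · rw [max_eq_left h]; linarith
      _ = 2 ^ k * max |(n:ℝ)| 1 ^ k := by rw [mul_pow]
      _ ≤ 2 ^ k * (|(n:ℝ)| ^ k + 1) := by
          refine mul_le_mul_of_nonneg_left ?_ (pow_nonneg (by norm_num) k)
          rcases le_total |(n:ℝ)| 1 with h | h
          · rw [max_eq_right h, one_pow]; linarith [pow_nonneg (abs_nonneg (n:ℝ)) k]
          · rw [max_eq_left h]
            have h5 : (1:ℝ) ^ k ≤ |(n:ℝ)| ^ k := pow_le_pow_left₀ (by norm_num) h k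
            rw [one_pow] at h5; linarith
  have h3 : Real.exp (-Real.pi * T * ((n : ℝ) + 1/2) ^ 2 + S * |(n : ℝ) + 1/2|) ≤
      Real.exp |S| * Real.exp (-Real.pi * (T * (n:ℝ) ^ 2 - 2 * S1 * |(n:ℝ)|)) := by
    rw [← Real.exp_add, Real.exp_le_exp]
    have e1 : ((n:ℝ) + 1/2) ^ 2 ≥ (n:ℝ)^2 - |(n:ℝ)| := by
      have := neg_abs_le (n:ℝ); nlinarith
    have e2 : S * |(n : ℝ) + 1/2| ≤ |S| * (|(n:ℝ)| + 1) := by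
      calc S * |(n : ℝ) + 1/2| ≤ |S| * |(n : ℝ) + 1/2| :=
            mul_le_mul_of_nonneg_right (le_abs_self S) (abs_nonneg _)
        _ ≤ |S| * (|(n:ℝ)| + 1) := mul_le_mul_of_nonneg_left h1 (abs_nonneg S)
    have hpiT := mul_pos hπ hT
    have hexp2 : 2 * S1 * |(n:ℝ)| * Real.pi = T * |(n:ℝ)| * Real.pi + |S| * |(n:ℝ)| := by
      rw [hS1]; field_simp; try ring
    have e1π := mul_le_mul_of_nonneg_left e1 hpiT.le
    nlinarith [e1π, e2, hexp2, habs0, abs_nonneg S]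
  calc bnd k T S n ≤ (2 ^ k * (|(n:ℝ)| ^ k + 1)) * (Real.exp |S| *
        Real.exp (-Real.pi * (T * (n:ℝ) ^ 2 - 2 * S1 * |(n:ℝ)|))) :=
        mul_le_mul h2 h3 (Real.exp_nonneg _) (by positivity)
    _ = (Real.exp |S| * 2 ^ k) * ((|(n:ℝ)| ^ k + 1) * Real.exp (-Real.pi * (T * (n:ℝ) ^ 2 - 2 * S1 * |(n:ℝ)|))) := by ring

lemma norm_term (j : ℕ) (n : ℤ) (z τ : ℂ) :
    ‖((n : ℂ) + 1/2) ^ j * jt n z τ‖ =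
      |(n : ℝ) + 1/2| ^ j * Real.exp (-Real.pi * τ.im * ((n : ℝ) + 1/2) ^ 2 + z.re * ((n : ℝ) + 1/2)) := by
  have hc : ((n : ℂ) + 1/2) = (((n : ℝ) + 1/2 : ℝ) : ℂ) := by push_cast; ring
  rw [jt, hc]
  rw [norm_mul, norm_mul, norm_mul, norm_pow, norm_zpow]
  simp only [norm_neg, norm_one, one_zpow, Complex.norm_real, Real.norm_eq_abs, one_mul]
  rw [Complex.norm_exp, Complex.norm_exp, ← Real.exp_add]
  congr 2
  have e1 : ((Real.pi : ℂ) * Complex.I * τ * ((((n:ℝ) + 1/2 : ℝ)):ℂ) ^ 2).re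
      = -Real.pi * τ.im * ((n:ℝ) + 1/2) ^ 2 := by
    have : (Real.pi : ℂ) * Complex.I * τ * ((((n:ℝ) + 1/2 : ℝ)):ℂ) ^ 2
        = ((Real.pi * ((n:ℝ)+1/2)^2 : ℝ) : ℂ) * (Complex.I * τ) := by push_cast; ring
    rw [this, Complex.re_ofReal_mul, Complex.mul_re, Complex.I_re, Complex.I_im]
    ring
  have e2 : (z * ((((n:ℝ) + 1/2 : ℝ)):ℂ)).re = z.re * ((n:ℝ) + 1/2) := by
    rw [mul_comm, Complex.re_ofReal_mul]; ring
  rw [e1, e2]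
lemma norm_term_le (j : ℕ) (n : ℤ) {z τ : ℂ} {T S : ℝ} (hT : T ≤ τ.im) (hS : |z.re| ≤ S) :
    ‖((n : ℂ) + 1/2) ^ j * jt n z τ‖ ≤ bnd j T S n := by
  rw [norm_term, bnd]
  apply mul_le_mul_of_nonneg_left _ (by positivity)
  rw [Real.exp_le_exp]
  have h1 : -Real.pi * τ.im * ((n : ℝ) + 1/2) ^ 2 ≤ -Real.pi * T * ((n : ℝ) + 1/2) ^ 2 := by
    nlinarith [mul_nonneg (mul_nonneg Real.pi_pos.le (sub_nonneg.mpr hT)) (sq_nonneg ((n:ℝ)+1/2))]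
  have h2 : z.re * ((n : ℝ) + 1/2) ≤ S * |(n : ℝ) + 1/2| := by
    calc z.re * ((n : ℝ) + 1/2) ≤ |z.re * ((n : ℝ) + 1/2)| := le_abs_self _
      _ = |z.re| * |(n : ℝ) + 1/2| := abs_mul _ _
      _ ≤ S * |(n : ℝ) + 1/2| := mul_le_mul_of_nonneg_right hS (abs_nonneg _)
  linarith

lemma summable_term (j : ℕ) (z : ℂ) {τ : ℂ} (hτ : 0 < τ.im) :
    Summable fun n : ℤ => ((n : ℂ) + 1/2) ^ j * jt n z τ :=
  (summable_bnd j hτ |z.re|).of_norm_bounded fun n => norm_term_le j n le_rfl le_rfl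

lemma summable_norm_term (j : ℕ) (z : ℂ) {τ : ℂ} (hτ : 0 < τ.im) :
    Summable fun n : ℤ => ‖((n : ℂ) + 1/2) ^ j * jt n z τ‖ :=
  (summable_bnd j hτ |z.re|).of_nonneg_of_le (fun _ => norm_nonneg _)
    fun n => norm_term_le j n le_rfl le_rfl

/-- z-derivative of `Th` -/
lemma hasDerivAt_Th_z (j : ℕ) (z : ℂ) {τ : ℂ} (hτ : 0 < τ.im) :
    HasDerivAt (fun w => Th j w τ) (Th (j+1) z τ) z := by
  have key := hasDerivAt_tsum_of_isPreconnected
    (u := bnd (j+1) τ.im (|z.re| + 1))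
    (g := fun (n : ℤ) w => ((n : ℂ) + 1/2) ^ j * jt n w τ)
    (g' := fun (n : ℤ) w => ((n : ℂ) + 1/2) ^ (j+1) * jt n w τ)
    (t := {w : ℂ | |w.re| < |z.re| + 1}) (y₀ := z) (y := z)
    (summable_bnd (j+1) hτ _) ?_ ?_ ?_ ?_ ?_ (summable_term j z hτ) ?_
  · exact key
  · have : {w : ℂ | |w.re| < |z.re| + 1} = (fun w : ℂ => |w.re|) ⁻¹' (Set.Iio (|z.re| + 1)) := rfl
    rw [this]
    exact ((_root_.continuous_abs.comp Complex.continuous_re).isOpen_preimage _ isOpen_Iio)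
  · apply Convex.isPreconnected
    simpa only [abs_lt, Set.setOf_and] using (convex_halfSpace_re_gt _).inter (convex_halfSpace_re_lt _)
  · intro n w _
    show HasDerivAt (fun w => ((n : ℂ) + 1/2) ^ j * jt n w τ) (((n : ℂ) + 1/2) ^ (j+1) * jt n w τ) w
    have h2 : HasDerivAt (fun w : ℂ => Complex.exp (w * ((n : ℂ) + 1/2)))
        (Complex.exp (w * ((n : ℂ) + 1/2)) * ((n : ℂ) + 1/2)) w := (hasDerivAt_mul_const _).cexp
    have h3 := h2.const_mul (((n : ℂ) + 1/2) ^ j * ((-1 : ℂ) ^ n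
      * Complex.exp (Real.pi * I * τ * ((n : ℂ) + 1/2) ^ 2)))
    have hfun : (fun w : ℂ => ((n : ℂ) + 1/2) ^ j * jt n w τ)
        = fun w : ℂ => (((n : ℂ) + 1/2) ^ j * ((-1 : ℂ) ^ n
          * Complex.exp (Real.pi * I * τ * ((n : ℂ) + 1/2) ^ 2))) * Complex.exp (w * ((n : ℂ) + 1/2)) := by
      funext w; simp only [jt]; ring
    rw [hfun]
    exact h3.congr_deriv (by simp only [jt]; ring)
  · intro n w hw
    exact norm_term_le (j+1) n le_rfl (le_of_lt hw)
  · simp only [Set.mem_setOf_eq]; linarith [abs_nonneg z.re]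
  · simp only [Set.mem_setOf_eq]; linarith [abs_nonneg z.re]

/-- τ-derivative of `Th` : the heat equation, termwise -/
lemma hasDerivAt_Th_tau (j : ℕ) (z : ℂ) {τ : ℂ} (hτ : 0 < τ.im) :
    HasDerivAt (fun t => Th j z t) (Real.pi * I * Th (j+2) z τ) τ := by
  have key := hasDerivAt_tsum_of_isPreconnected
    (u := fun n => Real.pi * bnd (j+2) (τ.im/2) |z.re| n)
    (g := fun (n : ℤ) t => ((n : ℂ) + 1/2) ^ j * jt n z t)
    (g' := fun (n : ℤ) t => (Real.pi * I) * (((n : ℂ) + 1/2) ^ (j+2) * jt n z t))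
    (t := {t : ℂ | τ.im/2 < t.im}) (y₀ := τ) (y := τ)
    ((summable_bnd (j+2) (by linarith) _).mul_left _) ?_ ?_ ?_ ?_ ?_ (summable_term j z hτ) ?_
  · have : HasDerivAt (fun t => Th j z t) (∑' n : ℤ, (Real.pi * I) * (((n : ℂ) + 1/2) ^ (j+2) * jt n z τ)) τ := key
    rwa [tsum_mul_left] at this
  · exact continuous_im.isOpen_preimage _ isOpen_Ioi
  · exact (convex_halfSpace_im_gt _).isPreconnected
  · intro n t _
    show HasDerivAt (fun t => ((n : ℂ) + 1/2) ^ j * jt n z t)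
      ((Real.pi : ℂ) * I * (((n : ℂ) + 1/2) ^ (j+2) * jt n z t)) t
    have h1 : HasDerivAt (fun t : ℂ => Real.pi * I * t * ((n : ℂ) + 1/2) ^ 2)
        (Real.pi * I * ((n : ℂ) + 1/2) ^ 2) t := by
      have h0 := (hasDerivAt_mul_const (((n : ℂ) + 1/2) ^ 2)).const_mul ((Real.pi : ℂ) * I) (x := t)
      have hfun : (fun t : ℂ => Real.pi * I * t * ((n : ℂ) + 1/2) ^ 2)
          = fun t : ℂ => (Real.pi : ℂ) * I * (t * ((n : ℂ) + 1/2) ^ 2) := by funext t; ring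
      rw [hfun]; exact h0
    have h2 := h1.cexp
    have h3 := (h2.mul_const (Complex.exp (z * ((n : ℂ) + 1/2)))).const_mul
      (((n : ℂ) + 1/2) ^ j * (-1 : ℂ) ^ n)
    have hfun : (fun t : ℂ => ((n : ℂ) + 1/2) ^ j * jt n z t)
        = fun t : ℂ => (((n : ℂ) + 1/2) ^ j * (-1 : ℂ) ^ n)
          * (Complex.exp (Real.pi * I * t * ((n : ℂ) + 1/2) ^ 2) * Complex.exp (z * ((n : ℂ) + 1/2))) := by
      funext t; simp only [jt]; ring
    rw [hfun]
    exact h3.congr_deriv (by simp only [jt]; ring)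
  · intro n t ht
    rw [norm_mul]
    have : ‖(Real.pi : ℂ) * I‖ = Real.pi := by
      simp [Complex.norm_real, Real.norm_eq_abs, abs_of_pos Real.pi_pos]
    rw [this]
    exact mul_le_mul_of_nonneg_left (norm_term_le (j+2) n (le_of_lt ht) le_rfl) Real.pi_pos.le
  · simp only [Set.mem_setOf_eq]; linarith
  · simp only [Set.mem_setOf_eq]; linarith


/-! ### Part 2: the key cubic theta identity via an involution on `ℤ⁴` -/

/-- the sign-reversing involution -/
def sig : ℤ × ℤ × ℤ × ℤ → ℤ × ℤ × ℤ × ℤ := fun p =>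
  let l := p.1; let k := p.2.1; let m := p.2.2.1; let n := p.2.2.2
  if (k + m + n + l) % 2 = 0 then
    ((k-m-n-l-2)/2, ((k+m+n-l)/2, ((k+l+m-n)/2, (k+l+n-m)/2)))
  else
    ((m+n-k-l-1)/2, ((k+l+m+n+1)/2, ((k+m-l-n-1)/2, (k+n-l-m-1)/2)))

lemma sig_spec (l k m n : ℤ) :
    ((k+m+n+l) % 2 = 0 ∧ 2*(sig (l,k,m,n)).1 = k-m-n-l-2 ∧ 2*(sig (l,k,m,n)).2.1 = k+m+n-l
      ∧ 2*(sig (l,k,m,n)).2.2.1 = k+l+m-n ∧ 2*(sig (l,k,m,n)).2.2.2 = k+l+n-m) ∨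
    ((k+m+n+l) % 2 = 1 ∧ 2*(sig (l,k,m,n)).1 = m+n-k-l-1 ∧ 2*(sig (l,k,m,n)).2.1 = k+l+m+n+1
      ∧ 2*(sig (l,k,m,n)).2.2.1 = k+m-l-n-1 ∧ 2*(sig (l,k,m,n)).2.2.2 = k+n-l-m-1) := by
  by_cases h : (k+m+n+l) % 2 = 0
  · left; simp only [sig, if_pos h]; refine ⟨h, ?_, ?_, ?_, ?_⟩ <;> omega
  · right; simp only [sig, if_neg h]; refine ⟨by omega, ?_, ?_, ?_, ?_⟩ <;> omega

lemma sig_invol : Function.Involutive sig := by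
  rintro ⟨l, k, m, n⟩
  have hs1 := sig_spec l k m n
  rcases h1s : sig (l, k, m, n) with ⟨L, K, M, N⟩
  rw [h1s] at hs1
  have hs2 := sig_spec L K M N
  rcases h2s : sig (L, K, M, N) with ⟨A, B, C, D⟩
  rw [h2s] at hs2
  dsimp only at hs1 hs2
  simp only [Prod.mk.injEq]
  rcases hs1 with ⟨g0, g1, g2, g3, g4⟩ | ⟨g0, g1, g2, g3, g4⟩ <;>
    rcases hs2 with ⟨f0, f1, f2, f3, f4⟩ | ⟨f0, f1, f2, f3, f4⟩ <;>
    refine ⟨?_, ?_, ?_, ?_⟩ <;> omega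

section Identity

variable {τ : ℂ} (u v : ℂ)

/-- quadruple product term -/
noncomputable def TT (τ u v : ℂ) (a b c d : ℕ) (p : ℤ × ℤ × ℤ × ℤ) : ℂ :=
  (((p.1 : ℂ) + 1/2) ^ a * jt p.1 0 τ) * ((((p.2.1 : ℂ) + 1/2) ^ b * jt p.2.1 (u+v) τ)
    * ((((p.2.2.1 : ℂ) + 1/2) ^ c * jt p.2.2.1 u τ)
      * (((p.2.2.2 : ℂ) + 1/2) ^ d * jt p.2.2.2 v τ)))

/-- the combined term -/
noncomputable def HH (τ u v : ℂ) (p : ℤ × ℤ × ℤ × ℤ) : ℂ :=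
  ((p.1 : ℂ) + 1/2) * ((((p.2.1 : ℂ)) - p.2.2.1 - p.2.2.2 - 1/2) ^ 2 - ((p.1 : ℂ) + 1/2) ^ 2) *
    (jt p.1 0 τ * (jt p.2.1 (u+v) τ * (jt p.2.2.1 u τ * jt p.2.2.2 v τ)))

lemma tsum_mul4 {f g h k : ℤ → ℂ} (hf : Summable fun n => ‖f n‖) (hg : Summable fun n => ‖g n‖)
    (hh : Summable fun n => ‖h n‖) (hk : Summable fun n => ‖k n‖) :
    ((∑' n, f n) * ((∑' n, g n) * ((∑' n, h n) * (∑' n, k n)))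
        = ∑' p : ℤ × ℤ × ℤ × ℤ, f p.1 * (g p.2.1 * (h p.2.2.1 * k p.2.2.2)))
      ∧ Summable fun p : ℤ × ℤ × ℤ × ℤ => ‖f p.1 * (g p.2.1 * (h p.2.2.1 * k p.2.2.2))‖ := by
  have s2 : Summable fun q : ℤ × ℤ => ‖h q.1 * k q.2‖ := hh.mul_norm hk
  have e2 : (∑' n, h n) * (∑' n, k n) = ∑' q : ℤ × ℤ, h q.1 * k q.2 :=
    tsum_mul_tsum_of_summable_norm hh hk
  have s3 : Summable fun r : ℤ × ℤ × ℤ => ‖g r.1 * (h r.2.1 * k r.2.2)‖ :=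
    hg.mul_norm (g := fun q : ℤ × ℤ => h q.1 * k q.2) s2
  have e3 : (∑' n, g n) * (∑' q : ℤ × ℤ, h q.1 * k q.2)
      = ∑' r : ℤ × ℤ × ℤ, g r.1 * (h r.2.1 * k r.2.2) :=
    tsum_mul_tsum_of_summable_norm (g := fun q : ℤ × ℤ => h q.1 * k q.2) hg s2
  have s4 : Summable fun p : ℤ × ℤ × ℤ × ℤ => ‖f p.1 * (g p.2.1 * (h p.2.2.1 * k p.2.2.2))‖ :=
    hf.mul_norm (g := fun r : ℤ × ℤ × ℤ => g r.1 * (h r.2.1 * k r.2.2)) s3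
  have e4 : (∑' n, f n) * (∑' r : ℤ × ℤ × ℤ, g r.1 * (h r.2.1 * k r.2.2))
      = ∑' p : ℤ × ℤ × ℤ × ℤ, f p.1 * (g p.2.1 * (h p.2.2.1 * k p.2.2.2)) :=
    tsum_mul_tsum_of_summable_norm (g := fun r : ℤ × ℤ × ℤ => g r.1 * (h r.2.1 * k r.2.2)) hf s3
  exact ⟨by rw [e2, e3, e4], s4⟩

lemma monomial_eq (hτ : 0 < τ.im) (a b c d : ℕ) :
    Th a 0 τ * (Th b (u+v) τ * (Th c u τ * Th d v τ)) = ∑' p : ℤ × ℤ × ℤ × ℤ, TT τ u v a b c d p :=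
  (tsum_mul4 (summable_norm_term a 0 hτ) (summable_norm_term b (u+v) hτ)
    (summable_norm_term c u hτ) (summable_norm_term d v hτ)).1

lemma monomial_summable (hτ : 0 < τ.im) (a b c d : ℕ) : Summable (TT τ u v a b c d) :=
  ((tsum_mul4 (summable_norm_term a 0 hτ) (summable_norm_term b (u+v) hτ)
    (summable_norm_term c u hτ) (summable_norm_term d v hτ)).2).of_norm

lemma neg_one_zpow_odd (s r : ℤ) : (-1 : ℂ) ^ (s + (2*r + 1)) = -(-1 : ℂ) ^ s := by
  have h1 : (-1 : ℂ) ≠ 0 := by norm_num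
  rw [zpow_add₀ h1, zpow_add₀ h1, zpow_mul, zpow_one]
  norm_num

lemma jt_prod_formula (l k m n : ℤ) :
    jt l 0 τ * (jt k (u+v) τ * (jt m u τ * jt n v τ))
      = (-1 : ℂ) ^ (l + k + m + n) * Complex.exp
        (Real.pi * I * τ * (((l:ℂ)+1/2)^2 + ((k:ℂ)+1/2)^2 + ((m:ℂ)+1/2)^2 + ((n:ℂ)+1/2)^2)
          + (u * ((k:ℂ) + (m:ℂ) + 1) + v * ((k:ℂ) + (n:ℂ) + 1))) := by
  have h1 : (-1 : ℂ) ≠ 0 := by norm_num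
  have key : Real.pi * I * τ * (((l:ℂ)+1/2)^2 + ((k:ℂ)+1/2)^2 + ((m:ℂ)+1/2)^2 + ((n:ℂ)+1/2)^2)
      + (u * ((k:ℂ) + (m:ℂ) + 1) + v * ((k:ℂ) + (n:ℂ) + 1))
      = (Real.pi * I * τ * ((l:ℂ)+1/2)^2 + 0 * ((l:ℂ)+1/2))
        + ((Real.pi * I * τ * ((k:ℂ)+1/2)^2 + (u+v) * ((k:ℂ)+1/2))
        + ((Real.pi * I * τ * ((m:ℂ)+1/2)^2 + u * ((m:ℂ)+1/2))
        + (Real.pi * I * τ * ((n:ℂ)+1/2)^2 + v * ((n:ℂ)+1/2)))) := by ring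
  rw [key, zpow_add₀ h1, zpow_add₀ h1, zpow_add₀ h1,
    Complex.exp_add, Complex.exp_add, Complex.exp_add, Complex.exp_add, Complex.exp_add,
    Complex.exp_add, Complex.exp_add]
  simp only [jt]
  ring

lemma HH_neg (p : ℤ × ℤ × ℤ × ℤ) : HH τ u v (sig p) = - HH τ u v p := by
  obtain ⟨l, k, m, n⟩ := p
  have hs1 := sig_spec l k m n
  rcases h1s : sig (l, k, m, n) with ⟨L, K, M, N⟩
  rw [h1s] at hs1
  dsimp only at hs1
  rcases hs1 with ⟨h0, h1, h2, h3, h4⟩ | ⟨h0, h1, h2, h3, h4⟩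
  · -- even case
    have hL : (L : ℂ) = ((k:ℂ) - m - n - l - 2)/2 := by
      have := congrArg (fun x : ℤ => (x : ℂ)) h1; push_cast at this; linear_combination this/2
    have hK : (K : ℂ) = ((k:ℂ) + m + n - l)/2 := by
      have := congrArg (fun x : ℤ => (x : ℂ)) h2; push_cast at this; linear_combination this/2
    have hM : (M : ℂ) = ((k:ℂ) + l + m - n)/2 := by
      have := congrArg (fun x : ℤ => (x : ℂ)) h3; push_cast at this; linear_combination this/2
    have hN : (N : ℂ) = ((k:ℂ) + l + n - m)/2 := by
      have := congrArg (fun x : ℤ => (x : ℂ)) h4; push_cast at this; linear_combination this/2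
    have hpar : L + K + M + N = (l + k + m + n) + (2*((k - l - m - n - 2)/2) + 1) := by omega
    simp only [HH]
    rw [jt_prod_formula, jt_prod_formula, hpar, neg_one_zpow_odd]
    rw [show Real.pi * I * τ * (((L:ℂ)+1/2)^2 + ((K:ℂ)+1/2)^2 + ((M:ℂ)+1/2)^2 + ((N:ℂ)+1/2)^2)
          + (u * ((K:ℂ) + (M:ℂ) + 1) + v * ((K:ℂ) + (N:ℂ) + 1))
        = Real.pi * I * τ * (((l:ℂ)+1/2)^2 + ((k:ℂ)+1/2)^2 + ((m:ℂ)+1/2)^2 + ((n:ℂ)+1/2)^2)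
          + (u * ((k:ℂ) + (m:ℂ) + 1) + v * ((k:ℂ) + (n:ℂ) + 1)) from by
      rw [hL, hK, hM, hN]; ring]
    rw [show ((L:ℂ) + 1/2) * (((K:ℂ) - M - N - 1/2) ^ 2 - ((L:ℂ) + 1/2) ^ 2)
        = ((l:ℂ) + 1/2) * (((k:ℂ) - m - n - 1/2) ^ 2 - ((l:ℂ) + 1/2) ^ 2) from by
      rw [hL, hK, hM, hN]; ring]
    ring
  · -- odd case
    have hL : (L : ℂ) = ((m:ℂ) + n - k - l - 1)/2 := by
      have := congrArg (fun x : ℤ => (x : ℂ)) h1; push_cast at this; linear_combination this/2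
    have hK : (K : ℂ) = ((k:ℂ) + l + m + n + 1)/2 := by
      have := congrArg (fun x : ℤ => (x : ℂ)) h2; push_cast at this; linear_combination this/2
    have hM : (M : ℂ) = ((k:ℂ) + m - l - n - 1)/2 := by
      have := congrArg (fun x : ℤ => (x : ℂ)) h3; push_cast at this; linear_combination this/2
    have hN : (N : ℂ) = ((k:ℂ) + n - l - m - 1)/2 := by
      have := congrArg (fun x : ℤ => (x : ℂ)) h4; push_cast at this; linear_combination this/2
    have hpar : L + K + M + N = (l + k + m + n) + (2*(-l - 1) + 1) := by omega
    simp only [HH]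
    rw [jt_prod_formula, jt_prod_formula, hpar, neg_one_zpow_odd]
    rw [show Real.pi * I * τ * (((L:ℂ)+1/2)^2 + ((K:ℂ)+1/2)^2 + ((M:ℂ)+1/2)^2 + ((N:ℂ)+1/2)^2)
          + (u * ((K:ℂ) + (M:ℂ) + 1) + v * ((K:ℂ) + (N:ℂ) + 1))
        = Real.pi * I * τ * (((l:ℂ)+1/2)^2 + ((k:ℂ)+1/2)^2 + ((m:ℂ)+1/2)^2 + ((n:ℂ)+1/2)^2)
          + (u * ((k:ℂ) + (m:ℂ) + 1) + v * ((k:ℂ) + (n:ℂ) + 1)) from by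
      rw [hL, hK, hM, hN]; ring]
    rw [show ((L:ℂ) + 1/2) * (((K:ℂ) - M - N - 1/2) ^ 2 - ((L:ℂ) + 1/2) ^ 2)
        = ((l:ℂ) + 1/2) * (((k:ℂ) - m - n - 1/2) ^ 2 - ((l:ℂ) + 1/2) ^ 2) from by
      rw [hL, hK, hM, hN]; ring]
    ring

lemma tsum_HH_zero : ∑' p : ℤ × ℤ × ℤ × ℤ, HH τ u v p = 0 := by
  have e := (sig_invol.toPerm).tsum_eq (HH τ u v)
  simp only [Function.Involutive.coe_toPerm] at e
  have e2 : ∑' p : ℤ × ℤ × ℤ × ℤ, HH τ u v (sig p) = -∑' p : ℤ × ℤ × ℤ × ℤ, HH τ u v p := by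
    rw [tsum_congr (fun p => HH_neg u v p), tsum_neg]
  rw [e2] at e
  exact add_self_eq_zero.mp (by linear_combination -e)

/-- The key cubic theta identity. -/
lemma key_identity (hτ : 0 < τ.im) :
    Th 1 0 τ * (Th 2 (u+v) τ * Th 0 u τ * Th 0 v τ
      - 2 * Th 1 (u+v) τ * Th 1 u τ * Th 0 v τ - 2 * Th 1 (u+v) τ * Th 0 u τ * Th 1 v τ
      + 2 * Th 0 (u+v) τ * Th 1 u τ * Th 1 v τ + Th 0 (u+v) τ * Th 2 u τ * Th 0 v τ
      + Th 0 (u+v) τ * Th 0 u τ * Th 2 v τ)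
    = Th 3 0 τ * (Th 0 (u+v) τ * Th 0 u τ * Th 0 v τ) := by
  have hs := fun a b c d => monomial_summable u v hτ a b c d
  have hm := fun a b c d => monomial_eq u v hτ a b c d
  have h1 := ((((((hs 1 2 0 0).hasSum.sub ((hs 1 1 1 0).hasSum.mul_left 2)).sub
    ((hs 1 1 0 1).hasSum.mul_left 2)).add ((hs 1 0 1 1).hasSum.mul_left 2)).add
    (hs 1 0 2 0).hasSum).add (hs 1 0 0 2).hasSum).sub (hs 3 0 0 0).hasSum
  have hfun : (fun p => TT τ u v 1 2 0 0 p - 2 * TT τ u v 1 1 1 0 p - 2 * TT τ u v 1 1 0 1 p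
      + 2 * TT τ u v 1 0 1 1 p + TT τ u v 1 0 2 0 p + TT τ u v 1 0 0 2 p - TT τ u v 3 0 0 0 p)
      = HH τ u v := by
    funext p
    simp only [TT, HH]
    ring
  rw [hfun] at h1
  have h2 := h1.tsum_eq
  rw [tsum_HH_zero] at h2
  rw [← hm 1 2 0 0, ← hm 1 1 1 0, ← hm 1 1 0 1, ← hm 1 0 1 1, ← hm 1 0 2 0, ← hm 1 0 0 2,
    ← hm 3 0 0 0] at h2
  linear_combination -h2

end Identity


/-! ### Part 3: derivatives of the Jacobi form -/

lemma deriv_jTheta_zero {t : ℂ} (ht : 0 < t.im) : deriv (fun w => jTheta w t) 0 = Th 1 0 t := by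
  rw [show (fun w => jTheta w t) = fun w => Th 0 w t from funext fun w => jTheta_eq w t]
  exact (hasDerivAt_Th_z 0 0 ht).deriv

lemma deriv_inner {τ : ℂ} (hτ : 0 < τ.im) (x : ℂ) (hx : Th 0 x τ ≠ 0) (w : ℂ) :
    deriv (fun u => jacobiF u w τ) x
      = (2 * Real.pi * I * Th 1 0 τ / Th 0 (2 * Real.pi * I * w) τ)
        * ((Th 1 (x + 2 * Real.pi * I * w) τ * Th 0 x τ
            - Th 0 (x + 2 * Real.pi * I * w) τ * Th 1 x τ) / Th 0 x τ ^ 2) := by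
  have hfun : (fun u => jacobiF u w τ) = fun u =>
      (2 * Real.pi * I * Th 1 0 τ / Th 0 (2 * Real.pi * I * w) τ)
        * (Th 0 (u + 2 * Real.pi * I * w) τ / Th 0 u τ) := by
    funext u
    simp only [jacobiF]
    rw [deriv_jTheta_zero hτ, jTheta_eq, jTheta_eq, jTheta_eq]
    ring
  rw [hfun]
  have hA : HasDerivAt (fun u => Th 0 (u + 2 * Real.pi * I * w) τ)
      (Th 1 (x + 2 * Real.pi * I * w) τ) x := by
    have h0 := hasDerivAt_Th_z 0 (x + 2 * Real.pi * I * w) hτ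
    have h1 := h0.comp x ((hasDerivAt_id x).add_const (2 * Real.pi * I * w))
    simpa [Function.comp_def] using h1
  have hB : HasDerivAt (fun u => Th 0 u τ) (Th 1 x τ) x := hasDerivAt_Th_z 0 x hτ
  have hq := (hA.div hB hx).const_mul
    (2 * Real.pi * I * Th 1 0 τ / Th 0 (2 * Real.pi * I * w) τ)
  exact hq.deriv

end JacobiHeat

open JacobiHeat

/-- The heat equation for the Jacobi form: `∂F/∂τ(x,z,τ) = ∂²F/∂z∂x(x,z,τ)` at every point
with `Im τ > 0`, `θ(x|τ) ≠ 0` and `θ(2πiz|τ) ≠ 0`. -/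
theorem jacobiF_heat (x z τ : ℂ) (hτ : 0 < τ.im)
    (hx : jTheta x τ ≠ 0) (hz : jTheta (2 * Real.pi * I * z) τ ≠ 0) :
    deriv (fun t : ℂ => jacobiF x z t) τ
      = deriv (fun w : ℂ => deriv (fun u : ℂ => jacobiF u w τ) x) z := by
  rw [jTheta_eq] at hx hz
  -- LHS
  have hN := ((hasDerivAt_Th_tau 1 0 hτ).const_mul (2 * (Real.pi:ℂ) * I)).mul
    (hasDerivAt_Th_tau 0 (x + 2 * Real.pi * I * z) hτ)
  have hDen := (hasDerivAt_Th_tau 0 x hτ).mul (hasDerivAt_Th_tau 0 (2 * Real.pi * I * z) hτ)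
  have hD0 := hN.div hDen (mul_ne_zero hx hz)
  have hfeq : (fun t => 2 * Real.pi * I * Th 1 0 t * Th 0 (x + 2 * Real.pi * I * z) t /
      (Th 0 x t * Th 0 (2 * Real.pi * I * z) t)) =ᶠ[nhds τ] (fun t => jacobiF x z t) := by
    filter_upwards [(Complex.continuous_im.isOpen_preimage _ isOpen_Ioi).mem_nhds
      (by simpa using hτ)] with t ht
    simp only [Set.mem_preimage, Set.mem_Ioi] at ht
    simp only [jacobiF]
    rw [deriv_jTheta_zero ht, jTheta_eq, jTheta_eq, jTheta_eq]
  have hD : HasDerivAt (fun t : ℂ => jacobiF x z t) _ τ := hD0.congr_of_eventuallyEq hfeq.symm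
  rw [hD.deriv]
  -- RHS
  have hfun : (fun w : ℂ => deriv (fun u : ℂ => jacobiF u w τ) x) = fun w =>
      (2 * Real.pi * I * Th 1 0 τ / Th 0 (2 * Real.pi * I * w) τ)
        * ((Th 1 (x + 2 * Real.pi * I * w) τ * Th 0 x τ
            - Th 0 (x + 2 * Real.pi * I * w) τ * Th 1 x τ) / Th 0 x τ ^ 2) :=
    funext fun w => deriv_inner hτ x hx w
  rw [hfun]
  have hlin : HasDerivAt (fun w : ℂ => 2 * Real.pi * I * w) (2 * Real.pi * I) z := by
    simpa using (hasDerivAt_id z).const_mul (2 * (Real.pi:ℂ) * I)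
  have hCz : HasDerivAt (fun w : ℂ => Th 0 (2 * Real.pi * I * w) τ)
      (Th 1 (2 * Real.pi * I * z) τ * (2 * Real.pi * I)) z := by
    have := (hasDerivAt_Th_z 0 (2 * Real.pi * I * z) hτ).comp z hlin
    simpa [Function.comp_def] using this
  have hA1 : HasDerivAt (fun w : ℂ => Th 1 (x + 2 * Real.pi * I * w) τ)
      (Th 2 (x + 2 * Real.pi * I * z) τ * (2 * Real.pi * I)) z := by
    have := (hasDerivAt_Th_z 1 (x + 2 * Real.pi * I * z) hτ).comp z (hlin.const_add x)
    simpa [Function.comp_def] using this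
  have hA0 : HasDerivAt (fun w : ℂ => Th 0 (x + 2 * Real.pi * I * w) τ)
      (Th 1 (x + 2 * Real.pi * I * z) τ * (2 * Real.pi * I)) z := by
    have := (hasDerivAt_Th_z 0 (x + 2 * Real.pi * I * z) hτ).comp z (hlin.const_add x)
    simpa [Function.comp_def] using this
  have hQ := (hasDerivAt_const z (2 * (Real.pi:ℂ) * I * Th 1 0 τ)).div hCz hz
  have hG := ((hA1.mul_const (Th 0 x τ)).sub (hA0.mul_const (Th 1 x τ))).div_const
    (Th 0 x τ ^ 2)
  have hR := hQ.mul hG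
  have hR' : HasDerivAt (fun w : ℂ => (2 * Real.pi * I * Th 1 0 τ / Th 0 (2 * Real.pi * I * w) τ)
      * ((Th 1 (x + 2 * Real.pi * I * w) τ * Th 0 x τ
          - Th 0 (x + 2 * Real.pi * I * w) τ * Th 1 x τ) / Th 0 x τ ^ 2)) _ z := hR
  rw [hR'.deriv]
  -- final algebra
  have key := key_identity x (2 * Real.pi * I * z) hτ
  simp only [Nat.reduceAdd, Pi.mul_apply, Pi.div_apply, Pi.sub_apply]
  field_simp
  linear_combination (-2 * (Real.pi:ℂ)^2 * I^2) * key
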